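/- For all n ≥ 1, the number of inversion sequences of length n with no three consecutive equal entries equals ((n+1)! - d_{n+1})/n, where d_m denotes the number of derangements of {1,...,m}. -/

import Mathlib

def IsInvSeq {n : ℕ} (e : Fin n → Fin n) : Prop := ∀ i : Fin n, (e i : ℕ) ≤ (i : ℕ)

def extSeq {n : ℕ} (e : Fin n → Fin n) : ℕ → ℕ := fun i => if h : i < n then (e ⟨i, h⟩ : ℕ) else 0

/-- `e` contains three consecutive equal entries (the consecutive pattern 000). -/
def Contains000 {n : ℕ} (e : Fin n → Fin n) : Prop :=
  ∃ i : ℕ, i + 2 < n ∧ extSeq e i = extSeq e (i + 1) ∧ extSeq e (i + 1) = extSeq e (i + 2)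

noncomputable def I000 (n : ℕ) : ℕ := Nat.card {e : Fin n → Fin n // IsInvSeq e ∧ ¬ Contains000 e}

/-! ### Auxiliary definitions -/

instance {n : ℕ} : DecidablePred (@IsInvSeq n) :=
  fun e => decidable_of_iff (∀ i : Fin n, (e i : ℕ) ≤ (i : ℕ)) Iff.rfl

instance {n : ℕ} (e : Fin n → Fin n) : Decidable (Contains000 e) :=
  decidable_of_iff (∃ i < n, i + 2 < n ∧ extSeq e i = extSeq e (i + 1) ∧
      extSeq e (i + 1) = extSeq e (i + 2)) (by
    constructor
    · rintro ⟨i, -, h⟩; exact ⟨i, h⟩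
    · rintro ⟨i, h1, h2⟩; exact ⟨i, by omega, h1, h2⟩)

/-- The finset of 000-avoiding inversion sequences of length `n`. -/
def AvF (n : ℕ) : Finset (Fin n → Fin n) :=
  Finset.univ.filter (fun e => IsInvSeq e ∧ ¬ Contains000 e)

/-- The last two entries of a length-`m+2` sequence agree. -/
def lastTwoEq {m : ℕ} (e : Fin (m+2) → Fin (m+2)) : Prop :=
  (e ⟨m, Nat.lt_succ_of_lt (Nat.lt_succ_self m)⟩ : ℕ) = (e ⟨m+1, Nat.lt_succ_self (m+1)⟩ : ℕ)

instance {m : ℕ} : DecidablePred (@lastTwoEq m) :=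
  fun e => decidable_of_iff ((e ⟨m, Nat.lt_succ_of_lt (Nat.lt_succ_self m)⟩ : ℕ) = (e ⟨m+1, Nat.lt_succ_self (m+1)⟩ : ℕ)) Iff.rfl

/-- Those avoiding sequences of length `m+2` whose last two entries agree. -/
def CF (m : ℕ) : Finset (Fin (m+2) → Fin (m+2)) :=
  (AvF (m+2)).filter lastTwoEq

/-- Extend a sequence of length `n` by one more entry. -/
def ext1 {n : ℕ} (e : Fin n → Fin n) (v : Fin (n+1)) : Fin (n+1) → Fin (n+1) :=
  Fin.snoc (fun i => (e i).castSucc) v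

/-- Restrict a sequence of length `n+1` to its first `n` entries. -/
def res {n : ℕ} (e : Fin (n+1) → Fin (n+1)) : Fin n → Fin n :=
  fun i => ⟨min (e i.castSucc : ℕ) i, lt_of_le_of_lt (min_le_right _ _) i.isLt⟩

/-! ### Basic lemmas -/

lemma extSeq_eq {n : ℕ} (e : Fin n → Fin n) {i : ℕ} (h : i < n) :
    extSeq e i = (e ⟨i, h⟩ : ℕ) := dif_pos h

lemma res_val {n : ℕ} {e : Fin (n+1) → Fin (n+1)} (he : IsInvSeq e) (i : Fin n) :
    (res e i : ℕ) = (e i.castSucc : ℕ) := by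
  simp only [res]
  exact min_eq_left (by simpa using he i.castSucc)

lemma res_invSeq {n : ℕ} (e : Fin (n+1) → Fin (n+1)) : IsInvSeq (res e) :=
  fun _ => min_le_right _ _

lemma extSeq_res {n : ℕ} {e : Fin (n+1) → Fin (n+1)} (he : IsInvSeq e) {i : ℕ} (h : i < n) :
    extSeq (res e) i = extSeq e i := by
  rw [extSeq_eq _ h, extSeq_eq _ (Nat.lt_succ_of_lt h), res_val he]
  rfl

lemma not_contains_res {n : ℕ} {e : Fin (n+1) → Fin (n+1)} (he : IsInvSeq e)
    (hc : ¬ Contains000 e) : ¬ Contains000 (res e) := by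
  rintro ⟨i, hi, h1, h2⟩
  refine hc ⟨i, by omega, ?_, ?_⟩
  · rw [← extSeq_res he (show i < n by omega), ← extSeq_res he (show i+1 < n by omega)]
    exact h1
  · rw [← extSeq_res he (show i+1 < n by omega), ← extSeq_res he (show i+2 < n by omega)]
    exact h2

lemma ext1_castSucc {n : ℕ} (e : Fin n → Fin n) (v : Fin (n+1)) (i : Fin n) :
    ext1 e v i.castSucc = (e i).castSucc := by
  simp [ext1]

lemma ext1_last {n : ℕ} (e : Fin n → Fin n) (v : Fin (n+1)) :
    ext1 e v (Fin.last n) = v := by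
  simp [ext1]

lemma ext1_invSeq {n : ℕ} {e : Fin n → Fin n} (he : IsInvSeq e) (v : Fin (n+1)) :
    IsInvSeq (ext1 e v) := by
  intro i
  induction i using Fin.lastCases with
  | last => rw [ext1_last]; simpa [Fin.last] using Nat.lt_succ_iff.mp v.isLt
  | cast i => rw [ext1_castSucc]; simpa using he i

lemma res_ext1 {n : ℕ} {e : Fin n → Fin n} (he : IsInvSeq e) (v : Fin (n+1)) :
    res (ext1 e v) = e := by
  funext i
  apply Fin.ext
  show min ((ext1 e v i.castSucc : ℕ)) i = (e i : ℕ)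
  rw [ext1_castSucc]
  simpa using min_eq_left (he i)

lemma ext1_res {n : ℕ} {e : Fin (n+1) → Fin (n+1)} (he : IsInvSeq e) :
    ext1 (res e) (e (Fin.last n)) = e := by
  funext i
  induction i using Fin.lastCases with
  | last => rw [ext1_last]
  | cast i =>
    rw [ext1_castSucc]
    apply Fin.ext
    simpa using res_val he i

lemma extSeq_ext1_of_lt {n : ℕ} (e : Fin n → Fin n) (v : Fin (n+1)) {i : ℕ} (h : i < n) :
    extSeq (ext1 e v) i = extSeq e i := by
  rw [extSeq_eq _ (show i < n+1 by omega), extSeq_eq _ h]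
  have h2 : (⟨i, show i < n+1 by omega⟩ : Fin (n+1)) = (⟨i, h⟩ : Fin n).castSucc := rfl
  rw [h2, ext1_castSucc]
  simp

lemma extSeq_ext1_n {n : ℕ} (e : Fin n → Fin n) (v : Fin (n+1)) :
    extSeq (ext1 e v) n = (v : ℕ) := by
  rw [extSeq_eq _ (Nat.lt_succ_self n)]
  have h2 : (⟨n, Nat.lt_succ_self n⟩ : Fin (n+1)) = Fin.last n := rfl
  rw [h2, ext1_last]

lemma contains_ext1_iff {m : ℕ} (e : Fin (m+2) → Fin (m+2)) (v : Fin (m+3)) :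
    Contains000 (ext1 e v) ↔
      Contains000 e ∨ (lastTwoEq e ∧ (v : ℕ) = (e ⟨m+1, Nat.lt_succ_self (m+1)⟩ : ℕ)) := by
  unfold lastTwoEq
  constructor
  · rintro ⟨i, hi, h1, h2⟩
    by_cases h : i + 2 < m + 2
    · left
      refine ⟨i, h, ?_, ?_⟩
      · rw [← extSeq_ext1_of_lt e v (show i < m+2 by omega),
          ← extSeq_ext1_of_lt e v (show i+1 < m+2 by omega)]
        exact h1
      · rw [← extSeq_ext1_of_lt e v (show i+1 < m+2 by omega),
          ← extSeq_ext1_of_lt e v (show i+2 < m+2 by omega)]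
        exact h2
    · have him : m = i := by omega
      subst him
      right
      have q0 : extSeq (ext1 e v) m = extSeq e m := extSeq_ext1_of_lt e v (by omega)
      have q1 : extSeq (ext1 e v) (m+1) = extSeq e (m+1) := extSeq_ext1_of_lt e v (by omega)
      have q2 : extSeq (ext1 e v) (m+2) = (v : ℕ) := extSeq_ext1_n e v
      have r0 : extSeq e m = (e ⟨m, Nat.lt_succ_of_lt (Nat.lt_succ_self m)⟩ : ℕ) := extSeq_eq e (by omega)
      have r1 : extSeq e (m+1) = (e ⟨m+1, Nat.lt_succ_self (m+1)⟩ : ℕ) := extSeq_eq e (by omega)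
      exact ⟨by omega, by omega⟩
  · rintro (⟨i, hi, h1, h2⟩ | ⟨h1, h2⟩)
    · refine ⟨i, by omega, ?_, ?_⟩
      · rw [extSeq_ext1_of_lt e v (show i < m+2 by omega),
          extSeq_ext1_of_lt e v (show i+1 < m+2 by omega)]
        exact h1
      · rw [extSeq_ext1_of_lt e v (show i+1 < m+2 by omega),
          extSeq_ext1_of_lt e v (show i+2 < m+2 by omega)]
        exact h2
    · have q0 : extSeq (ext1 e v) m = extSeq e m := extSeq_ext1_of_lt e v (by omega)
      have q1 : extSeq (ext1 e v) (m+1) = extSeq e (m+1) := extSeq_ext1_of_lt e v (by omega)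
      have q2 : extSeq (ext1 e v) (m+2) = (v : ℕ) := extSeq_ext1_n e v
      have r0 : extSeq e m = (e ⟨m, Nat.lt_succ_of_lt (Nat.lt_succ_self m)⟩ : ℕ) := extSeq_eq e (by omega)
      have r1 : extSeq e (m+1) = (e ⟨m+1, Nat.lt_succ_self (m+1)⟩ : ℕ) := extSeq_eq e (by omega)
      exact ⟨m, by omega, by omega, by omega⟩

lemma mem_AvF {n : ℕ} {e : Fin n → Fin n} :
    e ∈ AvF n ↔ IsInvSeq e ∧ ¬ Contains000 e := by
  simp [AvF]

/-- The key fiber computation. -/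
lemma fiber_card {m : ℕ} (P : Fin (m+3) → Prop) [DecidablePred P]
    {e' : Fin (m+2) → Fin (m+2)} (he' : e' ∈ AvF (m+2)) :
    ((AvF (m+3)).filter (fun e => res e = e' ∧ P (e (Fin.last (m+2))))).card
      = (Finset.univ.filter (fun v : Fin (m+3) =>
          ¬(lastTwoEq e' ∧ (v : ℕ) = (e' ⟨m+1, Nat.lt_succ_self (m+1)⟩ : ℕ)) ∧ P v)).card := by
  obtain ⟨hinv', hav'⟩ := mem_AvF.mp he'
  apply Finset.card_nbij' (fun e => e (Fin.last (m+2))) (fun v => ext1 e' v)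
  · intro e he
    rw [Finset.mem_coe, Finset.mem_filter] at he
    obtain ⟨heA, hres, hP⟩ := he
    obtain ⟨hinv, hav⟩ := mem_AvF.mp heA
    rw [Finset.mem_coe, Finset.mem_filter]
    refine ⟨Finset.mem_univ _, ?_, hP⟩
    rintro ⟨hL, hv⟩
    beta_reduce at hv
    apply hav
    unfold lastTwoEq at hL
    have em : (e' ⟨m, Nat.lt_succ_of_lt (Nat.lt_succ_self m)⟩ : ℕ) = extSeq e m := by
      rw [← hres, ← extSeq_res hinv (show m < m+2 by omega),
        extSeq_eq _ (show m < m+2 by omega)]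
    have em1 : (e' ⟨m+1, Nat.lt_succ_self (m+1)⟩ : ℕ) = extSeq e (m+1) := by
      rw [← hres, ← extSeq_res hinv (show m+1 < m+2 by omega),
        extSeq_eq _ (show m+1 < m+2 by omega)]
    have hlast : extSeq e (m+2) = (e (Fin.last (m+2)) : ℕ) := by
      rw [extSeq_eq _ (show m+2 < m+3 by omega)]
      rfl
    exact ⟨m, by omega, by omega, by omega⟩
  · intro v hv
    rw [Finset.mem_coe, Finset.mem_filter] at hv
    obtain ⟨-, hcond, hP⟩ := hv
    rw [Finset.mem_coe, Finset.mem_filter]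
    refine ⟨mem_AvF.mpr ⟨ext1_invSeq hinv' v, ?_⟩, res_ext1 hinv' v, ?_⟩
    · rw [contains_ext1_iff]
      rintro (h | h)
      · exact hav' h
      · exact hcond h
    · beta_reduce
      rw [ext1_last]
      exact hP
  · intro e he
    rw [Finset.mem_coe, Finset.mem_filter] at he
    obtain ⟨hinv, -⟩ := mem_AvF.mp he.1
    rw [← he.2.1]
    exact ext1_res hinv
  · intro v hv
    exact ext1_last e' v

lemma card_filter_val_eq {m : ℕ} {c : ℕ} (hc : c < m + 3) :
    (Finset.univ.filter (fun v : Fin (m+3) => (v : ℕ) = c)).card = 1 := by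
  rw [Finset.card_eq_one]
  refine ⟨⟨c, hc⟩, ?_⟩
  ext w
  simp [Fin.ext_iff]

lemma key_fiber_a {m : ℕ} {e' : Fin (m+2) → Fin (m+2)} (he' : e' ∈ AvF (m+2)) :
    ((AvF (m+3)).filter (fun e => res e = e')).card
      = if lastTwoEq e' then m+2 else m+3 := by
  have h := fiber_card (fun _ => True) he'
  simp only [and_true] at h
  rw [h]
  by_cases hL : lastTwoEq e'
  · rw [if_pos hL]
    simp only [hL, true_and]
    have h2 := Finset.card_filter_add_card_filter_not
      (s := (Finset.univ : Finset (Fin (m+3))))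
      (p := fun v : Fin (m+3) => (v : ℕ) = (e' ⟨m+1, Nat.lt_succ_self (m+1)⟩ : ℕ))
    have h3 := card_filter_val_eq (m := m) (c := (e' ⟨m+1, Nat.lt_succ_self (m+1)⟩ : ℕ))
      (by have := (e' ⟨m+1, Nat.lt_succ_self (m+1)⟩).isLt; omega)
    have h4 : (Finset.univ : Finset (Fin (m+3))).card = m + 3 := by simp
    omega
  · rw [if_neg hL]
    have hall : ∀ v : Fin (m+3),
        ¬(lastTwoEq e' ∧ (v : ℕ) = (e' ⟨m+1, Nat.lt_succ_self (m+1)⟩ : ℕ)) := by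
      intro v hv
      exact hL hv.1
    rw [Finset.filter_true_of_mem (fun v _ => hall v)]
    simp

lemma key_fiber_c {m : ℕ} {e' : Fin (m+2) → Fin (m+2)} (he' : e' ∈ AvF (m+2)) :
    ((AvF (m+3)).filter (fun e => res e = e' ∧
        (e (Fin.last (m+2)) : ℕ) = (e' ⟨m+1, Nat.lt_succ_self (m+1)⟩ : ℕ))).card
      = if lastTwoEq e' then 0 else 1 := by
  have hclt : (e' ⟨m+1, Nat.lt_succ_self (m+1)⟩ : ℕ) < m + 3 := by
    have := (e' ⟨m+1, Nat.lt_succ_self (m+1)⟩).isLt; omega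
  have h := fiber_card (fun v => (v : ℕ) = (e' ⟨m+1, Nat.lt_succ_self (m+1)⟩ : ℕ)) he'
  rw [h]
  by_cases hL : lastTwoEq e'
  · rw [if_pos hL]
    rw [Finset.card_eq_zero, Finset.filter_eq_empty_iff]
    intro v _
    rintro ⟨h1, h2⟩
    exact h1 ⟨hL, h2⟩
  · rw [if_neg hL]
    rw [Finset.card_eq_one]
    refine ⟨⟨(e' ⟨m+1, Nat.lt_succ_self (m+1)⟩ : ℕ), hclt⟩, ?_⟩
    ext w
    simp only [Finset.mem_filter, Finset.mem_univ, true_and, Finset.mem_singleton,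
      Fin.ext_iff]
    constructor
    · rintro ⟨-, h2⟩; exact h2
    · intro h2; exact ⟨fun hc => hL hc.1, h2⟩

/-! ### The two recurrences -/

lemma res_maps {m : ℕ} : ∀ e ∈ AvF (m+3), res e ∈ AvF (m+2) := by
  intro e he
  obtain ⟨hinv, hav⟩ := mem_AvF.mp he
  exact mem_AvF.mpr ⟨res_invSeq e, not_contains_res hinv hav⟩

lemma rec_a (m : ℕ) :
    (AvF (m+3)).card + (CF m).card = (m+3) * (AvF (m+2)).card := by
  classical
  rw [Finset.card_eq_sum_card_fiberwise (res_maps (m := m))]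
  rw [Finset.sum_congr rfl (fun e' he' => key_fiber_a he')]
  have hC : (CF m).card = ∑ e' ∈ AvF (m+2), (if lastTwoEq e' then 1 else 0) := by
    rw [CF, Finset.card_filter]
  rw [hC, ← Finset.sum_add_distrib]
  have hpt : ∀ e' ∈ AvF (m+2),
      ((if lastTwoEq e' then m+2 else m+3) + (if lastTwoEq e' then 1 else 0)) = m + 3 := by
    intro e' _
    split <;> omega
  rw [Finset.sum_congr rfl hpt, Finset.sum_const, smul_eq_mul, mul_comm]

lemma CF_filter_eq {m : ℕ} {e' : Fin (m+2) → Fin (m+2)} :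
    (CF (m+1)).filter (fun e => res e = e')
      = (AvF (m+3)).filter (fun e => res e = e' ∧
          (e (Fin.last (m+2)) : ℕ) = (e' ⟨m+1, Nat.lt_succ_self (m+1)⟩ : ℕ)) := by
  rw [CF, Finset.filter_filter]
  apply Finset.filter_congr
  intro e he
  obtain ⟨hinv, -⟩ := mem_AvF.mp he
  unfold lastTwoEq
  have hv1 : ((res e) ⟨m+1, Nat.lt_succ_self (m+1)⟩ : ℕ)
      = (e ⟨m+1, Nat.lt_succ_of_lt (Nat.lt_succ_self (m+1))⟩ : ℕ) := by
    rw [res_val hinv (⟨m+1, Nat.lt_succ_self (m+1)⟩ : Fin (m+2))]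
    rfl
  have hv2 : (e ⟨m+1+1, by omega⟩ : ℕ) = (e (Fin.last (m+2)) : ℕ) := rfl
  constructor
  · rintro ⟨h1, h2⟩
    subst h2
    refine ⟨rfl, ?_⟩
    rw [hv1, ← hv2]
    exact h1.symm
  · rintro ⟨h2, h1⟩
    subst h2
    refine ⟨?_, rfl⟩
    rw [hv1] at h1
    rw [hv2]
    exact h1.symm

lemma rec_c (m : ℕ) :
    (CF (m+1)).card + (CF m).card = (AvF (m+2)).card := by
  classical
  have hmap : ∀ e ∈ CF (m+1), res e ∈ AvF (m+2) := by
    intro e he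
    rw [CF, Finset.mem_filter] at he
    exact res_maps e he.1
  rw [Finset.card_eq_sum_card_fiberwise hmap]
  have key : ∀ e' ∈ AvF (m+2), ((CF (m+1)).filter (fun e => res e = e')).card
      = if lastTwoEq e' then 0 else 1 := by
    intro e' he'
    rw [CF_filter_eq]
    exact key_fiber_c he'
  rw [Finset.sum_congr rfl key]
  have hC : (CF m).card = ∑ e' ∈ AvF (m+2), (if lastTwoEq e' then 1 else 0) := by
    rw [CF, Finset.card_filter]
  rw [hC, ← Finset.sum_add_distrib]
  have hpt : ∀ e' ∈ AvF (m+2),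
      ((if lastTwoEq e' then 0 else 1) + (if lastTwoEq e' then 1 else 0)) = 1 := by
    intro e' _
    split <;> omega
  rw [Finset.sum_congr rfl hpt, Finset.sum_const, smul_eq_mul, mul_one]

/-! ### Base cases and arithmetic -/

lemma a1 : (AvF 1).card = 1 := by decide
lemma a2 : (AvF 2).card = 2 := by decide
lemma c0 : (CF 0).card = 1 := by decide

lemma numDer_le (n : ℕ) : numDerangements n ≤ n.factorial := by
  induction n using Nat.twoStepInduction with
  | zero => simp
  | one => simp [Nat.factorial]
  | more n ih1 ih2 =>
    rw [numDerangements_add_two]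
    calc (n+1) * (numDerangements n + numDerangements (n+1))
        ≤ (n+1) * (n.factorial + (n+1).factorial) :=
          Nat.mul_le_mul_left _ (Nat.add_le_add ih1 ih2)
      _ = (n+2).factorial := by
          rw [show (n+2).factorial = (n+2) * (n+1).factorial from rfl,
            show (n+1).factorial = (n+1) * n.factorial from rfl]
          ring

lemma main_ind (m : ℕ) :
    ((m+1 : ℤ) * (AvF (m+1)).card = (m+2).factorial - numDerangements (m+2)) ∧
    ((m+2 : ℤ) * (AvF (m+2)).card = (m+3).factorial - numDerangements (m+3)) ∧
    (((CF m).card : ℤ) + (m+1) * (AvF (m+1)).card = ((AvF (m+2)).card : ℤ)) := by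
  induction m with
  | zero =>
    refine ⟨?_, ?_, ?_⟩
    · rw [a1]
      norm_num [show numDerangements 2 = 1 from rfl, Nat.factorial]
    · rw [a2]
      norm_num [show numDerangements 3 = 2 from rfl, Nat.factorial]
    · rw [a1, a2, c0]
      norm_num
  | succ m ih =>
    obtain ⟨h1, h2, h3⟩ := ih
    have r1' : ((AvF (m+3)).card : ℤ) + ((CF m).card : ℤ)
        = ((m : ℤ)+3) * ((AvF (m+2)).card : ℤ) := by exact_mod_cast rec_a m
    have r2' : ((CF (m+1)).card : ℤ) + ((CF m).card : ℤ) = ((AvF (m+2)).card : ℤ) := by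
      exact_mod_cast rec_c m
    refine ⟨h2, ?_, ?_⟩
    · have hd : (numDerangements (m+4) : ℤ)
          = ((m : ℤ)+3) * ((numDerangements (m+2) : ℤ) + (numDerangements (m+3) : ℤ)) := by
        exact_mod_cast numDerangements_add_two (m+2)
      have hf4 : ((m+4).factorial : ℤ) = ((m : ℤ)+4) * ((m+3).factorial : ℤ) := by
        exact_mod_cast Nat.factorial_succ (m+3)
      have hf3 : ((m+3).factorial : ℤ) = ((m : ℤ)+3) * ((m+2).factorial : ℤ) := by
        exact_mod_cast Nat.factorial_succ (m+2)
      have hR : ((m+4).factorial : ℤ) - (numDerangements (m+4) : ℤ)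
          = ((m : ℤ)+3) * ((((m+3).factorial : ℤ) - (numDerangements (m+3) : ℤ))
            + (((m+2).factorial : ℤ) - (numDerangements (m+2) : ℤ))) := by
        rw [hd, hf4, hf3]; ring
      show (((m+1 : ℕ) : ℤ) + 2) * ((AvF (m+3)).card : ℤ)
          = ((m+4).factorial : ℤ) - (numDerangements (m+4) : ℤ)
      push_cast at h1 h2 ⊢
      linear_combination ((m : ℤ)+3) * h2 + ((m : ℤ)+3) * h1 + ((m : ℤ)+3) * r1'
        - ((m : ℤ)+3) * h3 - hR
    · show ((CF (m+1)).card : ℤ) + (((m+1 : ℕ) : ℤ) + 1) * ((AvF (m+2)).card : ℤ)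
          = ((AvF (m+3)).card : ℤ)
      push_cast at h1 h2 h3 ⊢
      linarith [r1', r2']

lemma I000_eq (n : ℕ) : I000 n = (AvF n).card := by
  rw [I000, Nat.card_eq_fintype_card, AvF]
  exact Fintype.card_subtype _

/-- `|I_n(000)| = ((n+1)! - d_{n+1})/n`, stated in the equivalent product form
`n * |I_n(000)| = (n+1)! - d_{n+1}` (the division is exact). -/
theorem stmt2 (n : ℕ) (hn : 1 ≤ n) :
    n * I000 n = (n + 1).factorial - numDerangements (n + 1) := by
  obtain ⟨m, rfl⟩ : ∃ m, n = m + 1 := ⟨n - 1, by omega⟩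
  obtain ⟨h1, -, -⟩ := main_ind m
  have hle : numDerangements (m+2) ≤ (m+2).factorial := numDer_le _
  rw [I000_eq]
  zify [show numDerangements (m+1+1) ≤ (m+1+1).factorial from hle]
  show (((m+1 : ℕ)) : ℤ) * ((AvF (m+1)).card : ℤ)
      = ((m+2).factorial : ℤ) - (numDerangements (m+2) : ℤ)
  push_cast at h1 ⊢
  linarith [h1]
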